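/- Let d be a positive integer and define p = (2d+3)(d+1)(4d)^{d+1} and α = d+1. Let Φ_{d,ρ} denote the unique positive root of ρ(x+1)^d = x^{d+1}. Then p ≥ (2α+1)·α·Φ_{d, α+1/p}^{d+1}. -/

import Mathlib

theorem p_property (d : ℕ) (hd : 0 < d) :
    let p : ℝ := (2 * d + 3) * (d + 1) * (4 * d) ^ (d + 1)
    let α : ℝ := d + 1
    ∀ Φ : ℝ, 0 < Φ → (α + 1 / p) * (Φ + 1) ^ d = Φ ^ (d + 1) →
      (2 * α + 1) * α * Φ ^ (d + 1) ≤ p := by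
  intro p α Φ hΦ heq
  have hD : (1:ℝ) ≤ (d:ℝ) := by exact_mod_cast hd
  set D : ℝ := (d:ℝ) with hDdef
  have h4D : (1:ℝ) ≤ 4 * D := by linarith
  have h4Dpos : (0:ℝ) < 4 * D := by linarith
  have hpow1 : (1:ℝ) ≤ (4 * D) ^ (d + 1) := one_le_pow₀ h4D
  have hp1 : (1:ℝ) ≤ p := by
    have h0 : (1:ℝ) ≤ (2 * D + 3) * (D + 1) := by nlinarith
    calc (1:ℝ) ≤ (2 * D + 3) * (D + 1) := h0
      _ ≤ (2 * D + 3) * (D + 1) * (4 * D) ^ (d + 1) := by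
          nlinarith [hpow1, h0]
  have hppos : (0:ℝ) < p := by linarith
  set ρ : ℝ := α + 1 / p with hρdef
  have hρle : ρ ≤ D + 2 := by
    have : 1 / p ≤ 1 := by
      rw [div_le_one hppos]; exact hp1
    simp only [hρdef, α]; linarith
  have hρpos : 0 < ρ := by
    have : 0 < 1 / p := by positivity
    simp only [hρdef, α]; linarith
  -- Bernoulli: (3D+1)*(4D+1)^d ≤ (4D)^d * (4D+1)
  have hbern : (3 * D + 1) * (4 * D + 1) ^ d ≤ (4 * D) ^ d * (4 * D + 1) := by
    have ha : (-2:ℝ) ≤ -(1 / (4 * D + 1)) := by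
      have h1 : (0:ℝ) < 4 * D + 1 := by linarith
      have : 1 / (4 * D + 1) ≤ 1 := by rw [div_le_one h1]; linarith
      linarith
    have hb := one_add_mul_le_pow ha d
    have h1 : (0:ℝ) < 4 * D + 1 := by linarith
    have hkey : (1 + -(1 / (4 * D + 1))) * (4 * D + 1) = 4 * D := by
      field_simp; ring
    have hmul : (1 + (d:ℝ) * -(1 / (4 * D + 1))) * (4 * D + 1) ^ d ≤
        ((1 + -(1 / (4 * D + 1))) * (4 * D + 1)) ^ d := by
      rw [mul_pow]
      have hposp : (0:ℝ) ≤ (4 * D + 1) ^ d := by positivity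
      exact mul_le_mul_of_nonneg_right hb hposp
    rw [hkey] at hmul
    have hl : (1 + (d:ℝ) * -(1 / (4 * D + 1))) = (3 * D + 1) / (4 * D + 1) := by
      field_simp; ring
    rw [hl] at hmul
    rw [div_mul_eq_mul_div, div_le_iff₀ h1] at hmul
    linarith [hmul]
  -- key strict inequality
  have hkey : ρ * (4 * D + 1) ^ d < (4 * D) ^ (d + 1) := by
    have hpp : (0:ℝ) < (4 * D + 1) ^ d := by positivity
    have h1 : ρ * (4 * D + 1) ^ d ≤ (D + 2) * (4 * D + 1) ^ d :=
      mul_le_mul_of_nonneg_right hρle hpp.le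
    have h2 : (D + 2) * (4 * D + 1) < 4 * D * (3 * D + 1) := by nlinarith
    have h3 : (D + 2) * (4 * D + 1) ^ d * (4 * D + 1) < 4 * D * ((4 * D) ^ d * (4 * D + 1)) := by
      nlinarith [hbern, hpp, h2, mul_pos h4Dpos (by linarith : (0:ℝ) < 4 * D + 1)]
    have h4 : (D + 2) * (4 * D + 1) ^ d < 4 * D * (4 * D) ^ d := by
      have h5 : (0:ℝ) < 4 * D + 1 := by linarith
      nlinarith [h3]
    calc ρ * (4 * D + 1) ^ d ≤ (D + 2) * (4 * D + 1) ^ d := h1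
      _ < 4 * D * (4 * D) ^ d := h4
      _ = (4 * D) ^ (d + 1) := by rw [pow_succ]; ring
  -- Φ ≤ 4D
  have hΦle : Φ ≤ 4 * D := by
    by_contra h
    push_neg at h
    have hΦ1 : (0:ℝ) < Φ + 1 := by linarith
    have hmono : (4 * D) ^ (d + 1) * (Φ + 1) ^ d ≤ Φ ^ (d + 1) * (4 * D + 1) ^ d := by
      have hstep : 4 * D * (Φ + 1) ≤ Φ * (4 * D + 1) := by nlinarith
      have hstepd : (4 * D * (Φ + 1)) ^ d ≤ (Φ * (4 * D + 1)) ^ d := by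
        apply pow_le_pow_left₀ (by positivity) hstep
      have hh : 4 * D * (4 * D * (Φ + 1)) ^ d ≤ Φ * (Φ * (4 * D + 1)) ^ d := by
        have hn : (0:ℝ) ≤ (4 * D * (Φ + 1)) ^ d := by positivity
        nlinarith [hstepd, hn, h, hΦ]
      have e1 : (4 * D * (Φ + 1)) ^ d = (4 * D) ^ d * (Φ + 1) ^ d := mul_pow _ _ _
      have e2 : (Φ * (4 * D + 1)) ^ d = Φ ^ d * (4 * D + 1) ^ d := mul_pow _ _ _
      calc (4 * D) ^ (d + 1) * (Φ + 1) ^ d = 4 * D * (4 * D * (Φ + 1)) ^ d := by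
            rw [e1, pow_succ]; ring
        _ ≤ Φ * (Φ * (4 * D + 1)) ^ d := hh
        _ = Φ ^ (d + 1) * (4 * D + 1) ^ d := by rw [e2, pow_succ]; ring
    have hcontra : ρ * (Φ + 1) ^ d * (4 * D + 1) ^ d < ρ * (Φ + 1) ^ d * (4 * D + 1) ^ d := by
      have hΦ1d : (0:ℝ) < (Φ + 1) ^ d := by positivity
      calc ρ * (Φ + 1) ^ d * (4 * D + 1) ^ d
          = ρ * (4 * D + 1) ^ d * (Φ + 1) ^ d := by ring
        _ < (4 * D) ^ (d + 1) * (Φ + 1) ^ d := mul_lt_mul_of_pos_right hkey hΦ1d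
        _ ≤ Φ ^ (d + 1) * (4 * D + 1) ^ d := hmono
        _ = ρ * (Φ + 1) ^ d * (4 * D + 1) ^ d := by rw [heq]
    exact lt_irrefl _ hcontra
  -- finish
  have hΦpow : Φ ^ (d + 1) ≤ (4 * D) ^ (d + 1) := pow_le_pow_left₀ hΦ.le hΦle _
  have hcoef : (0:ℝ) ≤ (2 * α + 1) * α := by
    have : (0:ℝ) < α := by simp only [α]; linarith
    positivity
  calc (2 * α + 1) * α * Φ ^ (d + 1) ≤ (2 * α + 1) * α * (4 * D) ^ (d + 1) :=
        mul_le_mul_of_nonneg_left hΦpow hcoef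
    _ = p := by simp only [α, p]; ring
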